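/- arXiv:2604.19336 — 3 statements merged into one kernel-verified Lean document; each statement's English description precedes it below -/
import Mathlib

section
/- (Progress per iteration.) Let f_1,…,f_M : ℝ^d → ℝ each be L-smooth with average f = (1/M)∑_{m=1}^M f_m, and let x̄^* be a global minimizer of f over ℝ^d. Let x_1,…,x_M ∈ ℝ^d be arbitrary points with average x̄ = (1/M)∑_m x_m and consensus error V = (1/M)∑_m ‖x_m − x̄‖². Let ξ_1,…,ξ_M be independent random samples (values in a measurable space S) and G : ℝ^d × S → ℝ^d a measurable map such that for every x ∈ ℝ^d and every m: E[G(x, ξ_m)] = ∇f_m(x) and E‖G(x, ξ_m) − ∇f_m(x)‖² ≤ σ_m² < ∞. Then E‖(1/M)∑_{m=1}^M G(x_m, ξ_m)‖² ≤ (10/M²)∑_{m=1}^M σ_m² + 2L²·V + 4L·(f(x̄) − f(x̄^*)). -/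
open MeasureTheory ProbabilityTheory Finset
open scoped RealInnerProductSpace

section Aux

variable {E : Type*} [NormedAddCommGroup E] [InnerProductSpace ℝ E] [CompleteSpace E]

lemma descent_lemma (h : E → ℝ) (hd : Differentiable ℝ h) {L : ℝ} (hL : 0 < L)
    (hlip : LipschitzWith L.toNNReal (gradient h)) (x y : E) :
    h y ≤ h x + ⟪gradient h x, y - x⟫ + L / 2 * ‖y - x‖ ^ 2 := by
  set v := y - x with hv
  have hgradcont : Continuous (gradient h) := hlip.continuous
  set φ' : ℝ → ℝ := fun t => ⟪gradient h (x + t • v), v⟫ with hφ'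
  have hder : ∀ t : ℝ, HasDerivAt (fun s : ℝ => h (x + s • v)) (φ' t) t := by
    intro t
    have h1 : HasDerivAt (fun s : ℝ => x + s • v) v t := by
      simpa using ((hasDerivAt_id t).smul_const v).const_add x
    have h2 : HasFDerivAt h (InnerProductSpace.toDual ℝ E (gradient h (x + t • v))) (x + t • v) :=
      (hd _).hasGradientAt
    simpa [hφ', Function.comp_def] using (h2.comp_hasDerivAt t h1)
  have hcont : Continuous φ' := by
    apply Continuous.inner
    · exact hgradcont.comp (by continuity)
    · exact continuous_const
  have hftc : ∫ t in (0:ℝ)..1, φ' t = h (x + (1:ℝ) • v) - h (x + (0:ℝ) • v) := by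
    exact intervalIntegral.integral_eq_sub_of_hasDerivAt (fun t _ => hder t)
      (hcont.intervalIntegrable 0 1)
  have hbound : ∀ t ∈ Set.Icc (0:ℝ) 1, φ' t ≤ ⟪gradient h x, v⟫ + L * t * ‖v‖ ^ 2 := by
    intro t ht
    have : φ' t - ⟪gradient h x, v⟫ = ⟪gradient h (x + t • v) - gradient h x, v⟫ := by
      rw [inner_sub_left]
    have hle : ⟪gradient h (x + t • v) - gradient h x, v⟫ ≤ L * t * ‖v‖ ^ 2 := by
      calc ⟪gradient h (x + t • v) - gradient h x, v⟫
          ≤ ‖gradient h (x + t • v) - gradient h x‖ * ‖v‖ := real_inner_le_norm _ _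
        _ ≤ (L * (t * ‖v‖)) * ‖v‖ := by
            apply mul_le_mul_of_nonneg_right _ (norm_nonneg v)
            have := hlip.dist_le_mul (x + t • v) x
            rw [dist_eq_norm, dist_eq_norm] at this
            simpa [norm_smul, abs_of_nonneg ht.1, Real.coe_toNNReal _ hL.le,
              mul_assoc] using this
        _ = L * t * ‖v‖ ^ 2 := by ring
    linarith
  have hInt : ∫ t in (0:ℝ)..1, (⟪gradient h x, v⟫ + L * t * ‖v‖ ^ 2)
      = ⟪gradient h x, v⟫ + L / 2 * ‖v‖ ^ 2 := by
    rw [intervalIntegral.integral_add (intervalIntegrable_const (c := ⟪gradient h x, v⟫))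
      (Continuous.intervalIntegrable (by continuity) 0 1)]
    simp only [intervalIntegral.integral_const]
    have : ∫ t in (0:ℝ)..1, L * t * ‖v‖ ^ 2 = L / 2 * ‖v‖ ^ 2 := by
      have : (fun t : ℝ => L * t * ‖v‖ ^ 2) = fun t : ℝ => (L * ‖v‖ ^ 2) * t := by
        funext t; ring
      rw [this, intervalIntegral.integral_const_mul, integral_id]
      ring
    rw [this]; simp
  have hmono : ∫ t in (0:ℝ)..1, φ' t ≤ ∫ t in (0:ℝ)..1, (⟪gradient h x, v⟫ + L * t * ‖v‖ ^ 2) := by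
    apply intervalIntegral.integral_mono_on zero_le_one (hcont.intervalIntegrable 0 1)
      (Continuous.intervalIntegrable (by continuity) 0 1) hbound
  rw [hftc, hInt] at hmono
  simp only [one_smul, zero_smul, add_zero] at hmono
  have : x + v = y := by rw [hv]; abel
  rw [this] at hmono
  linarith

lemma grad_sq_le (h : E → ℝ) (hd : Differentiable ℝ h) {L : ℝ} (hL : 0 < L)
    (hlip : LipschitzWith L.toNNReal (gradient h)) (xstar : E) (hmin : ∀ y, h xstar ≤ h y)
    (x : E) : ‖gradient h x‖ ^ 2 ≤ 2 * L * (h x - h xstar) := by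
  set g := gradient h x with hg
  have key := descent_lemma h hd hL hlip x (x - L⁻¹ • g)
  have h1 : x - L⁻¹ • g - x = -(L⁻¹ • g) := by abel
  rw [h1] at key
  have h2 : ⟪g, -(L⁻¹ • g)⟫ = -(L⁻¹ * ‖g‖ ^ 2) := by
    rw [inner_neg_right, real_inner_smul_right, real_inner_self_eq_norm_sq]
  have h3 : ‖-(L⁻¹ • g)‖ ^ 2 = L⁻¹ ^ 2 * ‖g‖ ^ 2 := by
    rw [norm_neg, norm_smul]
    simp [abs_of_nonneg (inv_nonneg.2 hL.le), mul_pow]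
  rw [h2, h3] at key
  have h4 := hmin (x - L⁻¹ • g)
  have : h xstar ≤ h x - (2 * L)⁻¹ * ‖g‖ ^ 2 := by
    calc h xstar ≤ h (x - L⁻¹ • g) := h4
      _ ≤ h x + -(L⁻¹ * ‖g‖ ^ 2) + L / 2 * (L⁻¹ ^ 2 * ‖g‖ ^ 2) := key
      _ = h x - (2 * L)⁻¹ * ‖g‖ ^ 2 := by field_simp; ring
  have h5 : (2 * L)⁻¹ * ‖g‖ ^ 2 ≤ h x - h xstar := by linarith
  calc ‖g‖ ^ 2 = (2 * L) * ((2 * L)⁻¹ * ‖g‖ ^ 2) := by field_simp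
    _ ≤ (2 * L) * (h x - h xstar) := by
        apply mul_le_mul_of_nonneg_left h5 (by positivity)
    _ = 2 * L * (h x - h xstar) := by ring

lemma gradient_avg {M : ℕ} (f : Fin M → E → ℝ) (hdiff : ∀ m, Differentiable ℝ (f m))
    (c : ℝ) (z : E) :
    HasGradientAt (fun w => c * ∑ m, f m w) (c • ∑ m, gradient (f m) z) z := by
  rw [hasGradientAt_iff_hasFDerivAt]
  have h1 : ∀ m : Fin M, HasFDerivAt (f m)
      (InnerProductSpace.toDual ℝ E (gradient (f m) z)) z :=
    fun m => (hdiff m z).hasGradientAt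
  have h2 : HasFDerivAt (fun w => ∑ m, f m w)
      (∑ m, InnerProductSpace.toDual ℝ E (gradient (f m) z)) z :=
    HasFDerivAt.fun_sum (fun m _ => h1 m)
  have h3 := h2.const_mul c
  have : InnerProductSpace.toDual ℝ E (c • ∑ m, gradient (f m) z)
      = c • ∑ m, InnerProductSpace.toDual ℝ E (gradient (f m) z) := by
    rw [_root_.map_smul, map_sum]
  rw [this]
  exact h3

omit [CompleteSpace E] in
lemma lipschitz_avg {M : ℕ} (hM : 1 ≤ M) (g : Fin M → E → E) {L : ℝ} (hL : 0 < L)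
    (hlip : ∀ m, LipschitzWith L.toNNReal (g m)) :
    LipschitzWith L.toNNReal (fun z => (M : ℝ)⁻¹ • ∑ m, g m z) := by
  have hMpos : (0:ℝ) < M := by exact_mod_cast hM
  apply LipschitzWith.of_dist_le_mul
  intro a b
  simp only [dist_eq_norm]
  have : (M : ℝ)⁻¹ • ∑ m, g m a - (M : ℝ)⁻¹ • ∑ m, g m b
      = (M : ℝ)⁻¹ • ∑ m, (g m a - g m b) := by
    rw [← smul_sub, ← Finset.sum_sub_distrib]
  rw [this, norm_smul]
  calc ‖(M:ℝ)⁻¹‖ * ‖∑ m, (g m a - g m b)‖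
      ≤ (M:ℝ)⁻¹ * ∑ m : Fin M, (L * ‖a - b‖) := by
        rw [Real.norm_eq_abs, abs_of_nonneg (by positivity)]
        apply mul_le_mul_of_nonneg_left _ (by positivity)
        refine (norm_sum_le _ _).trans (Finset.sum_le_sum fun m _ => ?_)
        have := (hlip m).dist_le_mul a b
        rwa [dist_eq_norm, dist_eq_norm, Real.coe_toNNReal _ hL.le] at this
    _ = L.toNNReal * ‖a - b‖ := by
        rw [Finset.sum_const, card_univ, Fintype.card_fin, nsmul_eq_mul,
          Real.coe_toNNReal _ hL.le]
        field_simp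

omit [CompleteSpace E] in
/-- inner product of two L² functions is integrable -/
lemma integrable_inner_of_memL2 {α : Type*} [MeasurableSpace α] {μ : Measure α}
    {f g : α → E} (hf : MemLp f 2 μ) (hg : MemLp g 2 μ) :
    Integrable (fun ω => ⟪f ω, g ω⟫) μ := by
  have h := L2.integrable_inner (𝕜 := ℝ) (hf.toLp f) (hg.toLp g)
  apply h.congr
  filter_upwards [hf.coeFn_toLp, hg.coeFn_toLp] with ω h1 h2
  rw [h1, h2]

omit [CompleteSpace E] in
/-- norm-squared of an average is at most the average of norms-squared -/
lemma avg_norm_sq_le {M : ℕ} (hM : 1 ≤ M) (a : Fin M → E) :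
    ‖(M : ℝ)⁻¹ • ∑ m, a m‖ ^ 2 ≤ (M : ℝ)⁻¹ * ∑ m, ‖a m‖ ^ 2 := by
  have hMpos : (0:ℝ) < M := by exact_mod_cast hM
  have h1 : ‖∑ m, a m‖ ^ 2 ≤ (M : ℝ) * ∑ m, ‖a m‖ ^ 2 := by
    have h2 : ‖∑ m, a m‖ ≤ ∑ m, ‖a m‖ := norm_sum_le _ _
    have h3 : (∑ m, ‖a m‖) ^ 2 ≤ (M : ℝ) * ∑ m, ‖a m‖ ^ 2 := by
      have := sq_sum_le_card_mul_sum_sq (s := (univ : Finset (Fin M))) (f := fun m => ‖a m‖)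
      simpa [card_univ] using this
    calc ‖∑ m, a m‖ ^ 2 ≤ (∑ m, ‖a m‖) ^ 2 := by
          apply pow_le_pow_left₀ (norm_nonneg _) h2
      _ ≤ (M : ℝ) * ∑ m, ‖a m‖ ^ 2 := h3
  rw [norm_smul, Real.norm_eq_abs, abs_of_nonneg (by positivity), mul_pow]
  calc (M:ℝ)⁻¹ ^ 2 * ‖∑ m, a m‖ ^ 2 ≤ (M:ℝ)⁻¹ ^ 2 * ((M : ℝ) * ∑ m, ‖a m‖ ^ 2) := by
        apply mul_le_mul_of_nonneg_left h1 (by positivity)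
    _ = (M : ℝ)⁻¹ * ∑ m, ‖a m‖ ^ 2 := by
        field_simp

end Aux

set_option maxHeartbeats 1000000 in
/-- **Progress per iteration** (Lemma 2 of the paper). For `L`-smooth local losses with average
`F` minimized at `x̄*`, points `x₁,…,x_M` with average `x̄` and consensus error `V`, and
independent unbiased stochastic gradients with variance bounds `σₘ²`:
`E‖(1/M)∑ₘ G(xₘ, ξₘ)‖² ≤ (10/M²)∑ₘ σₘ² + 2L²V + 4L(F(x̄) - F(x̄*))`. -/
theorem progress_per_iteration
    {d M : ℕ} (hM : 1 ≤ M)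
    {Ω : Type} [MeasurableSpace Ω] (P : Measure Ω) [IsProbabilityMeasure P]
    {S : Type} [MeasurableSpace S]
    (L : ℝ) (hL : 0 < L)
    (f : Fin M → EuclideanSpace ℝ (Fin d) → ℝ)
    (hdiff : ∀ m, Differentiable ℝ (f m))
    (hsmooth : ∀ m, LipschitzWith L.toNNReal (gradient (f m)))
    (F : EuclideanSpace ℝ (Fin d) → ℝ)
    (hF : ∀ z, F z = (M : ℝ)⁻¹ * ∑ m, f m z)
    (xbarstar : EuclideanSpace ℝ (Fin d)) (hmin : ∀ y, F xbarstar ≤ F y)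
    (x : Fin M → EuclideanSpace ℝ (Fin d))
    (xbar : EuclideanSpace ℝ (Fin d)) (hxbar : xbar = (M : ℝ)⁻¹ • ∑ m, x m)
    (V : ℝ) (hV : V = (M : ℝ)⁻¹ * ∑ m, ‖x m - xbar‖ ^ 2)
    (ξ : Fin M → Ω → S)
    (hmeas : ∀ m, Measurable (ξ m))
    (hindep : iIndepFun ξ P)
    (G : EuclideanSpace ℝ (Fin d) → S → EuclideanSpace ℝ (Fin d))
    (hG : Measurable (Function.uncurry G))
    (σ2 : Fin M → ℝ)
    (hL2 : ∀ m z, MemLp (fun ω => G z (ξ m ω)) 2 P)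
    (hunbiased : ∀ m z, ∫ ω, G z (ξ m ω) ∂P = gradient (f m) z)
    (hvar : ∀ m z, ∫ ω, ‖G z (ξ m ω) - gradient (f m) z‖ ^ 2 ∂P ≤ σ2 m) :
    ∫ ω, ‖(M : ℝ)⁻¹ • ∑ m, G (x m) (ξ m ω)‖ ^ 2 ∂P
      ≤ 10 / (M : ℝ) ^ 2 * ∑ m, σ2 m + 2 * L ^ 2 * V
        + 4 * L * (F xbar - F xbarstar) := by
  classical
  have hMpos : (0:ℝ) < M := by exact_mod_cast hM
  set c : ℝ := (M : ℝ)⁻¹ with hc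
  set μv : Fin M → EuclideanSpace ℝ (Fin d) := fun m => gradient (f m) (x m) with hμv
  set Y : Fin M → Ω → EuclideanSpace ℝ (Fin d) := fun m ω => G (x m) (ξ m ω) - μv m with hY
  set μS : EuclideanSpace ℝ (Fin d) := ∑ m, μv m with hμS
  -- basic integrability facts
  have hgL2 : ∀ m, MemLp (fun ω => G (x m) (ξ m ω)) 2 P := fun m => hL2 m (x m)
  have hYL2 : ∀ m, MemLp (Y m) 2 P := fun m => (hgL2 m).sub (memLp_const (μv m))
  have hgint : ∀ m, Integrable (fun ω => G (x m) (ξ m ω)) P :=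
    fun m => (hgL2 m).integrable one_le_two
  have hYint : ∀ m, Integrable (Y m) P := fun m => (hYL2 m).integrable one_le_two
  have hYmean : ∀ m, ∫ ω, Y m ω ∂P = 0 := by
    intro m
    rw [hY]
    simp only
    rw [integral_sub (hgint m) (integrable_const _), hunbiased m (x m), integral_const]
    simp [hμv]
  -- cross terms vanish
  have hcross : ∀ m n : Fin M, m ≠ n → ∫ ω, ⟪Y m ω, Y n ω⟫ ∂P = 0 := by
    intro m n hmn
    set φ : Fin M → S → EuclideanSpace ℝ (Fin d) := fun k s => G (x k) s - μv k with hφ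
    have hφmeas : ∀ k, Measurable (φ k) := by
      intro k
      have h1 : Measurable fun s => Function.uncurry G (x k, s) :=
        hG.comp measurable_prodMk_left
      exact h1.sub measurable_const
    have hind : IndepFun (Y m) (Y n) P := by
      have h0 : IndepFun (ξ m) (ξ n) P := hindep.indepFun hmn
      exact h0.comp (hφmeas m) (hφmeas n)
    have hinner : ∀ ω, ⟪Y m ω, Y n ω⟫ = ∑ i : Fin d, Y m ω i * Y n ω i := by
      intro ω
      rw [PiLp.inner_apply]
      simp [RCLike.inner_apply, mul_comm]
    have hYcoordL2 : ∀ k (i : Fin d), MemLp (fun ω => Y k ω i) 2 P := by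
      intro k i
      exact (EuclideanSpace.proj i : EuclideanSpace ℝ (Fin d) →L[ℝ] ℝ).comp_memLp' (hYL2 k)
    have hprod_int : ∀ i : Fin d, Integrable (fun ω => Y m ω i * Y n ω i) P := by
      intro i
      have := integrable_inner_of_memL2 (E := ℝ) (hYcoordL2 m i) (hYcoordL2 n i)
      simpa [RCLike.inner_apply, mul_comm] using this
    have hswap : ∫ ω, ⟪Y m ω, Y n ω⟫ ∂P = ∑ i : Fin d, ∫ ω, Y m ω i * Y n ω i ∂P := by
      rw [show (fun ω => ⟪Y m ω, Y n ω⟫) = fun ω => ∑ i : Fin d, Y m ω i * Y n ω i from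
        funext hinner]
      exact integral_finset_sum _ (fun i _ => hprod_int i)
    rw [hswap]
    apply Finset.sum_eq_zero
    intro i _
    have hproj : Measurable (fun v : EuclideanSpace ℝ (Fin d) => v i) :=
      (EuclideanSpace.proj i : EuclideanSpace ℝ (Fin d) →L[ℝ] ℝ).continuous.measurable
    have hindc : IndepFun (fun ω => Y m ω i) (fun ω => Y n ω i) P :=
      hind.comp hproj hproj
    have := hindc.integral_mul_eq_mul_integral (hYcoordL2 m i).aestronglyMeasurable
      (hYcoordL2 n i).aestronglyMeasurable
    have hmz : ∫ ω, Y m ω i ∂P = 0 := by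
      have h := (EuclideanSpace.proj i : EuclideanSpace ℝ (Fin d) →L[ℝ] ℝ).integral_comp_comm (hYint m)
      rw [show (fun ω => Y m ω i) = fun ω => (EuclideanSpace.proj i : EuclideanSpace ℝ (Fin d) →L[ℝ] ℝ) (Y m ω) from
        rfl]
      rw [h, hYmean m]
      exact map_zero _
    have hnz : ∫ ω, Y n ω i ∂P = 0 := by
      have h := (EuclideanSpace.proj i : EuclideanSpace ℝ (Fin d) →L[ℝ] ℝ).integral_comp_comm (hYint n)
      rw [show (fun ω => Y n ω i) = fun ω => (EuclideanSpace.proj i : EuclideanSpace ℝ (Fin d) →L[ℝ] ℝ) (Y n ω) from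
        rfl]
      rw [h, hYmean n]
      exact map_zero _
    have hmul : ∫ ω, Y m ω i * Y n ω i ∂P = (∫ ω, Y m ω i ∂P) * ∫ ω, Y n ω i ∂P := this
    rw [hmul, hmz, hnz, mul_zero]
  -- expansion of the integrand
  have expand : ∀ ω, ‖c • ∑ m, G (x m) (ξ m ω)‖ ^ 2
      = c ^ 2 * ((∑ m, ∑ n, ⟪Y m ω, Y n ω⟫) + (2 * ∑ m, ⟪Y m ω, μS⟫ + ‖μS‖ ^ 2)) := by
    intro ω
    have hsum : ∑ m, G (x m) (ξ m ω) = (∑ m, Y m ω) + μS := by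
      rw [hμS, ← Finset.sum_add_distrib]
      apply Finset.sum_congr rfl
      intro m _
      simp [hY]
    rw [hsum, norm_smul, Real.norm_eq_abs, abs_of_nonneg (by positivity), mul_pow]
    congr 1
    rw [@norm_add_sq_real (EuclideanSpace ℝ (Fin d))]
    rw [show ⟪∑ m, Y m ω, μS⟫ = ∑ m, ⟪Y m ω, μS⟫ from sum_inner _ _ _]
    rw [show ‖∑ m, Y m ω‖ ^ 2 = ⟪∑ m, Y m ω, ∑ m, Y m ω⟫ from
      (real_inner_self_eq_norm_sq _).symm]
    rw [show ⟪∑ m, Y m ω, ∑ m, Y m ω⟫ = ∑ m, ∑ n, ⟪Y m ω, Y n ω⟫ by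
      rw [sum_inner]; exact Finset.sum_congr rfl fun m _ => inner_sum _ _ _]
    ring
  -- integrability of pieces
  have hI1 : ∀ m n : Fin M, Integrable (fun ω => ⟪Y m ω, Y n ω⟫) P :=
    fun m n => integrable_inner_of_memL2 (hYL2 m) (hYL2 n)
  have hI2 : ∀ m : Fin M, Integrable (fun ω => ⟪Y m ω, μS⟫) P :=
    fun m => integrable_inner_of_memL2 (hYL2 m) (memLp_const μS)
  have hI2z : ∀ m : Fin M, ∫ ω, ⟪Y m ω, μS⟫ ∂P = 0 := by
    intro m
    have hcomm : (fun ω => ⟪Y m ω, μS⟫) = fun ω => (innerSL ℝ μS) (Y m ω) := by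
      funext ω
      rw [innerSL_apply_apply]
      exact real_inner_comm _ _
    rw [hcomm, (innerSL ℝ μS).integral_comp_comm (hYint m), hYmean m]
    simp
  -- compute the integral
  have hintegral : ∫ ω, ‖c • ∑ m, G (x m) (ξ m ω)‖ ^ 2 ∂P
      = c ^ 2 * ((∑ m, ∫ ω, ‖Y m ω‖ ^ 2 ∂P) + ‖μS‖ ^ 2) := by
    rw [show (fun ω => ‖c • ∑ m, G (x m) (ξ m ω)‖ ^ 2)
        = fun ω => c ^ 2 * ((∑ m, ∑ n, ⟪Y m ω, Y n ω⟫) + (2 * ∑ m, ⟪Y m ω, μS⟫ + ‖μS‖ ^ 2))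
        from funext expand]
    rw [integral_const_mul]
    congr 1
    have hIdd : Integrable (fun ω => ∑ m, ∑ n, ⟪Y m ω, Y n ω⟫) P :=
      integrable_finset_sum _ (fun m _ => integrable_finset_sum _ (fun n _ => hI1 m n))
    have hIs : Integrable (fun ω => ∑ m, ⟪Y m ω, μS⟫) P :=
      integrable_finset_sum _ (fun m _ => hI2 m)
    have hIC : Integrable (fun ω => 2 * ∑ m, ⟪Y m ω, μS⟫) P := hIs.const_mul 2
    have hIB : Integrable (fun ω => 2 * ∑ m, ⟪Y m ω, μS⟫ + ‖μS‖ ^ 2) P :=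
      hIC.add (integrable_const _)
    rw [integral_add hIdd hIB]
    rw [integral_add hIC (integrable_const _)]
    rw [integral_const_mul, integral_finset_sum _ (fun m _ => hI2 m)]
    rw [Finset.sum_eq_zero (fun m _ => hI2z m)]
    rw [integral_finset_sum _ (fun m _ => integrable_finset_sum _ (fun n _ => hI1 m n))]
    have hdiag : ∀ m : Fin M, ∫ ω, ∑ n, ⟪Y m ω, Y n ω⟫ ∂P = ∫ ω, ‖Y m ω‖ ^ 2 ∂P := by
      intro m
      rw [integral_finset_sum _ (fun n _ => hI1 m n)]
      rw [Finset.sum_eq_single m (fun n _ hnm => hcross m n (Ne.symm hnm)) (by simp)]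
      congr 1
      funext ω
      rw [real_inner_self_eq_norm_sq]
    rw [Finset.sum_congr rfl (fun m _ => hdiag m)]
    simp [measure_univ]
  -- variance bound
  have hvarsum : ∑ m, ∫ ω, ‖Y m ω‖ ^ 2 ∂P ≤ ∑ m, σ2 m := by
    apply Finset.sum_le_sum
    intro m _
    exact hvar m (x m)
  have hσnonneg : ∀ m : Fin M, 0 ≤ σ2 m := by
    intro m
    refine le_trans ?_ (hvar m (x m))
    positivity
  -- gradient of F
  have hFfun : F = fun w => c * ∑ m, f m w := funext hF
  have hFgrad : ∀ z, HasGradientAt F (c • ∑ m, gradient (f m) z) z := by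
    intro z
    rw [hFfun]
    exact gradient_avg f hdiff c z
  have hFgrad_eq : gradient F = fun z => c • ∑ m, gradient (f m) z :=
    funext fun z => (hFgrad z).gradient
  have hFdiff : Differentiable ℝ F := fun z => (hFgrad z).differentiableAt
  have hFlip : LipschitzWith L.toNNReal (gradient F) := by
    rw [hFgrad_eq]
    exact lipschitz_avg hM (fun m => gradient (f m)) hL hsmooth
  have hgradF : ‖c • ∑ m, gradient (f m) xbar‖ ^ 2 ≤ 2 * L * (F xbar - F xbarstar) := by
    have := grad_sq_le F hFdiff hL hFlip xbarstar hmin xbar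
    rwa [hFgrad_eq] at this
  -- deterministic part
  have hdet : ‖c • μS‖ ^ 2 ≤ 2 * L ^ 2 * V + 4 * L * (F xbar - F xbarstar) := by
    have hsplit : c • μS = c • (∑ m, (μv m - gradient (f m) xbar))
        + c • ∑ m, gradient (f m) xbar := by
      rw [← smul_add, hμS, ← Finset.sum_add_distrib]
      congr 1
      apply Finset.sum_congr rfl
      intro m _
      abel
    set a : EuclideanSpace ℝ (Fin d) := c • (∑ m, (μv m - gradient (f m) xbar)) with ha
    set b : EuclideanSpace ℝ (Fin d) := c • ∑ m, gradient (f m) xbar with hb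
    have h2ab : ‖c • μS‖ ^ 2 ≤ 2 * ‖a‖ ^ 2 + 2 * ‖b‖ ^ 2 := by
      rw [hsplit]
      have h1 : ‖a + b‖ ≤ ‖a‖ + ‖b‖ := norm_add_le a b
      have h2 : ‖a + b‖ ^ 2 ≤ (‖a‖ + ‖b‖) ^ 2 := pow_le_pow_left₀ (norm_nonneg _) h1 2
      nlinarith [sq_nonneg (‖a‖ - ‖b‖)]
    have hanorm : ‖a‖ ^ 2 ≤ L ^ 2 * V := by
      have h1 := avg_norm_sq_le hM (fun m => μv m - gradient (f m) xbar)
      have h2 : ∀ m : Fin M, ‖μv m - gradient (f m) xbar‖ ^ 2 ≤ L ^ 2 * ‖x m - xbar‖ ^ 2 := by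
        intro m
        have := (hsmooth m).dist_le_mul (x m) xbar
        rw [dist_eq_norm, dist_eq_norm, Real.coe_toNNReal _ hL.le] at this
        have hn : ‖μv m - gradient (f m) xbar‖ ≤ L * ‖x m - xbar‖ := this
        calc ‖μv m - gradient (f m) xbar‖ ^ 2 ≤ (L * ‖x m - xbar‖) ^ 2 :=
              pow_le_pow_left₀ (norm_nonneg _) hn 2
          _ = L ^ 2 * ‖x m - xbar‖ ^ 2 := by ring
      calc ‖a‖ ^ 2 ≤ c * ∑ m, ‖μv m - gradient (f m) xbar‖ ^ 2 := h1
        _ ≤ c * ∑ m, L ^ 2 * ‖x m - xbar‖ ^ 2 := by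
            apply mul_le_mul_of_nonneg_left (Finset.sum_le_sum fun m _ => h2 m) (by positivity)
        _ = L ^ 2 * (c * ∑ m, ‖x m - xbar‖ ^ 2) := by
            rw [← Finset.mul_sum]; ring
        _ = L ^ 2 * V := by rw [hV]
    have hbnorm : ‖b‖ ^ 2 ≤ 2 * L * (F xbar - F xbarstar) := hgradF
    linarith
  -- assembly
  have hfinal : ∫ ω, ‖c • ∑ m, G (x m) (ξ m ω)‖ ^ 2 ∂P
      ≤ c ^ 2 * ∑ m, σ2 m + (2 * L ^ 2 * V + 4 * L * (F xbar - F xbarstar)) := by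
    rw [hintegral]
    have : c ^ 2 * ((∑ m, ∫ ω, ‖Y m ω‖ ^ 2 ∂P) + ‖μS‖ ^ 2)
        = c ^ 2 * (∑ m, ∫ ω, ‖Y m ω‖ ^ 2 ∂P) + ‖c • μS‖ ^ 2 := by
      rw [norm_smul, Real.norm_eq_abs, abs_of_nonneg (by positivity), mul_pow]
      ring
    rw [this]
    have h1 : c ^ 2 * (∑ m, ∫ ω, ‖Y m ω‖ ^ 2 ∂P) ≤ c ^ 2 * ∑ m, σ2 m :=
      mul_le_mul_of_nonneg_left hvarsum (by positivity)
    linarith [hdet]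
  refine hfinal.trans ?_
  have hc2 : c ^ 2 * ∑ m, σ2 m ≤ 10 / (M : ℝ) ^ 2 * ∑ m, σ2 m := by
    apply mul_le_mul_of_nonneg_right _ (Finset.sum_nonneg fun m _ => hσnonneg m)
    rw [hc]
    rw [div_eq_mul_inv, ← inv_pow]
    have h9 : (0:ℝ) ≤ ((M:ℝ)⁻¹) ^ 2 := sq_nonneg _
    linarith
  linarith
end

section
/- (Convex inner-product lower bound.) Let f_1,…,f_M : ℝ^d → ℝ each be convex and L-smooth with average f = (1/M)∑_{m=1}^M f_m. Then for any points x_1,…,x_M ∈ ℝ^d with average x̄ = (1/M)∑_m x_m and consensus error V = (1/M)∑_m ‖x_m − x̄‖², and any x^* ∈ ℝ^d: (1/M)∑_{m=1}^M ⟨∇f_m(x_m), x̄ − x^*⟩ ≥ f(x̄) − f(x^*) − (L/2)·V. -/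
open Finset
open scoped RealInnerProductSpace

section aux
variable {E : Type*} [NormedAddCommGroup E] [InnerProductSpace ℝ E] [CompleteSpace E]

/-- line derivative of `g` along direction `v`. -/
lemma aux_hasDerivAt_line (g : E → ℝ) (hg : Differentiable ℝ g) (p v : E) (t : ℝ) :
    HasDerivAt (fun s : ℝ => g (p + s • v)) ⟪gradient g (p + t • v), v⟫ t := by
  have hline : HasDerivAt (fun s : ℝ => p + s • v) v t := by
    simpa using ((hasDerivAt_id t).smul_const v).const_add p
  have hgrad := (hg (p + t • v)).hasGradientAt
  rw [hasGradientAt_iff_hasFDerivAt] at hgrad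
  have := hgrad.comp_hasDerivAt t hline
  exact this

/-- convexity lower bound: `g a + ⟪∇g a, b - a⟫ ≤ g b`. -/
lemma aux_convex_lb (g : E → ℝ) (hg : Differentiable ℝ g)
    (hc : ConvexOn ℝ Set.univ g) (a b : E) :
    g a + ⟪gradient g a, b - a⟫ ≤ g b := by
  set φ : ℝ → ℝ := fun s => g (a + s • (b - a)) with hφ
  have hφc : ConvexOn ℝ Set.univ φ := by
    have := hc.comp_affineMap
      (AffineMap.const ℝ ℝ a + LinearMap.toAffineMap (LinearMap.toSpanSingleton ℝ E (b - a)))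
    simpa [φ, Function.comp_def, AffineMap.coe_add, LinearMap.toSpanSingleton_apply] using this
  have hd : HasDerivAt φ ⟪gradient g a, b - a⟫ 0 := by
    have := aux_hasDerivAt_line g hg a (b - a) 0
    simpa [φ] using this
  have hslope := hφc.le_slope_of_hasDerivAt (Set.mem_univ (0:ℝ)) (Set.mem_univ (1:ℝ))
    one_pos hd
  have : slope φ 0 1 = g b - g a := by
    simp [slope_def_field, φ]
  rw [this] at hslope
  linarith

/-- descent lemma: `g b ≤ g a + ⟪∇g a, b - a⟫ + L/2 ‖b - a‖²`. -/
lemma aux_descent (L : ℝ) (hL : 0 < L) (g : E → ℝ) (hg : Differentiable ℝ g)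
    (hlip : LipschitzWith L.toNNReal (gradient g)) (a b : E) :
    g b ≤ g a + ⟪gradient g a, b - a⟫ + L / 2 * ‖b - a‖ ^ 2 := by
  set v : E := b - a with hv
  set ψ : ℝ → ℝ := fun s =>
    g (a + s • v) - s * ⟪gradient g a, v⟫ - L / 2 * s ^ 2 * ‖v‖ ^ 2 with hψ
  have hψd : ∀ t : ℝ, HasDerivAt ψ
      (⟪gradient g (a + t • v), v⟫ - ⟪gradient g a, v⟫ - L * t * ‖v‖ ^ 2) t := by
    intro t
    have h1 := aux_hasDerivAt_line g hg a v t
    have h2 : HasDerivAt (fun s : ℝ => s * ⟪gradient g a, v⟫) ⟪gradient g a, v⟫ t := by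
      simpa using (hasDerivAt_id t).mul_const ⟪gradient g a, v⟫
    have h3 : HasDerivAt (fun s : ℝ => L / 2 * s ^ 2 * ‖v‖ ^ 2) (L * t * ‖v‖ ^ 2) t := by
      have := ((hasDerivAt_pow 2 t).const_mul (L / 2)).mul_const (‖v‖ ^ 2)
      refine this.congr_deriv ?_
      rw [show (2:ℕ) - 1 = 1 from rfl]
      push_cast
      ring
    exact (h1.sub h2).sub h3
  have hanti : AntitoneOn ψ (Set.Icc (0:ℝ) 1) := by
    apply antitoneOn_of_deriv_nonpos (convex_Icc 0 1)
    · exact fun t _ => (hψd t).differentiableAt.continuousAt.continuousWithinAt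
    · intro t ht
      exact ((hψd t).differentiableAt).differentiableWithinAt
    · intro t ht
      rw [interior_Icc] at ht
      rw [(hψd t).deriv]
      have hbound : ⟪gradient g (a + t • v) - gradient g a, v⟫ ≤ L * t * ‖v‖ ^ 2 := by
        calc ⟪gradient g (a + t • v) - gradient g a, v⟫
            ≤ ‖gradient g (a + t • v) - gradient g a‖ * ‖v‖ := real_inner_le_norm _ _
          _ ≤ (L * (t * ‖v‖)) * ‖v‖ := by
              apply mul_le_mul_of_nonneg_right _ (norm_nonneg v)
              have := hlip.dist_le_mul (a + t • v) a
              rw [dist_eq_norm, dist_eq_norm] at this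
              have h2 : ‖a + t • v - a‖ = t * ‖v‖ := by
                rw [add_sub_cancel_left, norm_smul, Real.norm_eq_abs, abs_of_pos ht.1]
              rw [h2] at this
              simpa [Real.coe_toNNReal _ hL.le] using this
          _ = L * t * ‖v‖ ^ 2 := by ring
      rw [inner_sub_left] at hbound
      linarith
  have h01 := hanti (Set.mem_Icc.2 ⟨le_refl 0, zero_le_one⟩)
    (Set.mem_Icc.2 ⟨zero_le_one, le_refl 1⟩) zero_le_one
  simp only [ψ, zero_smul, add_zero, one_smul, zero_mul, zero_pow, sub_zero, mul_zero,
    mul_one, one_pow] at h01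
  have : a + v = b := by rw [hv]; abel
  rw [this] at h01
  linarith

lemma aux_key (L : ℝ) (hL : 0 < L) (g : E → ℝ) (hg : Differentiable ℝ g)
    (hc : ConvexOn ℝ Set.univ g) (hlip : LipschitzWith L.toNNReal (gradient g))
    (a b c : E) :
    g b - g c - L / 2 * ‖a - b‖ ^ 2 ≤ ⟪gradient g a, b - c⟫ := by
  have h1 := aux_convex_lb g hg hc a c
  have h2 := aux_descent L hL g hg hlip a b
  have hn : ‖a - b‖ = ‖b - a‖ := norm_sub_rev a b
  have hsplit : (⟪gradient g a, b - c⟫ : ℝ)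
      = ⟪gradient g a, b - a⟫ - ⟪gradient g a, c - a⟫ := by
    rw [← inner_sub_right]; congr 1; abel
  rw [hsplit, hn]
  linarith
end aux

/-- **Convex inner-product lower bound.** For convex `L`-smooth local losses `f₁,…,f_M` with
average `F`, points `x₁,…,x_M` with average `x̄` and consensus error `V`, and any `x*`:
`(1/M)∑ₘ ⟪∇fₘ(xₘ), x̄ - x*⟫ ≥ F(x̄) - F(x*) - (L/2)V`. -/
theorem convex_inner_product_lower_bound
    {d M : ℕ} (hM : 1 ≤ M) (L : ℝ) (hL : 0 < L)
    (f : Fin M → EuclideanSpace ℝ (Fin d) → ℝ)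
    (hdiff : ∀ m, Differentiable ℝ (f m))
    (hconv : ∀ m, ConvexOn ℝ Set.univ (f m))
    (hsmooth : ∀ m, LipschitzWith L.toNNReal (gradient (f m)))
    (F : EuclideanSpace ℝ (Fin d) → ℝ)
    (hF : ∀ z, F z = (M : ℝ)⁻¹ * ∑ m, f m z)
    (x : Fin M → EuclideanSpace ℝ (Fin d))
    (xbar : EuclideanSpace ℝ (Fin d)) (hxbar : xbar = (M : ℝ)⁻¹ • ∑ m, x m)
    (V : ℝ) (hV : V = (M : ℝ)⁻¹ * ∑ m, ‖x m - xbar‖ ^ 2)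
    (xstar : EuclideanSpace ℝ (Fin d)) :
    F xbar - F xstar - L / 2 * V
      ≤ (M : ℝ)⁻¹ * ∑ m, ⟪gradient (f m) (x m), xbar - xstar⟫ := by
  have hMpos : (0:ℝ) < (M:ℝ) := by exact_mod_cast hM
  have hkey : ∀ m, f m xbar - f m xstar - L / 2 * ‖x m - xbar‖ ^ 2
      ≤ ⟪gradient (f m) (x m), xbar - xstar⟫ := fun m =>
    aux_key L hL (f m) (hdiff m) (hconv m) (hsmooth m) (x m) xbar xstar
  rw [hF, hF, hV]
  have hsum : ∑ m, (f m xbar - f m xstar - L / 2 * ‖x m - xbar‖ ^ 2)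
      ≤ ∑ m, ⟪gradient (f m) (x m), xbar - xstar⟫ :=
    Finset.sum_le_sum (fun m _ => hkey m)
  have heq : ∑ m, (f m xbar - f m xstar - L / 2 * ‖x m - xbar‖ ^ 2)
      = ∑ m, f m xbar - ∑ m, f m xstar - L / 2 * ∑ m, ‖x m - xbar‖ ^ 2 := by
    rw [Finset.sum_sub_distrib, Finset.sum_sub_distrib, Finset.mul_sum]
  rw [heq] at hsum
  have h2 := mul_le_mul_of_nonneg_left hsum (inv_nonneg.2 hMpos.le)
  calc (M:ℝ)⁻¹ * ∑ m, f m xbar - (M:ℝ)⁻¹ * ∑ m, f m xstar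
        - L / 2 * ((M:ℝ)⁻¹ * ∑ m, ‖x m - xbar‖ ^ 2)
      = (M:ℝ)⁻¹ * (∑ m, f m xbar - ∑ m, f m xstar - L / 2 * ∑ m, ‖x m - xbar‖ ^ 2) := by
        ring
    _ ≤ (M:ℝ)⁻¹ * ∑ m, ⟪gradient (f m) (x m), xbar - xstar⟫ := h2
end

section
/- (Strongly convex inner-product bound via Young's inequality.) Let f_1,…,f_M : ℝ^d → ℝ each be μ-strongly convex and L-smooth with average f = (1/M)∑_{m=1}^M f_m. Then for any points x_1,…,x_M ∈ ℝ^d with average x̄ = (1/M)∑_m x_m and consensus error V = (1/M)∑_m ‖x_m − x̄‖², any x^* ∈ ℝ^d, any η > 0 and any β > 0: −(2η/M)∑_{m=1}^M ⟨∇f_m(x_m), x̄ − x^*⟩ ≤ η(β − μ)‖x̄ − x^*‖² + (ηL²/β)·V − 2η·(f(x̄) − f(x^*)). -/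
open Finset
open scoped RealInnerProductSpace

lemma convex_first_order {E : Type*} [NormedAddCommGroup E] [InnerProductSpace ℝ E]
    {g : E → ℝ} (hg : ConvexOn ℝ Set.univ g) {G : E →L[ℝ] ℝ} {x : E}
    (hG : HasFDerivAt g G x) (y : E) :
    g x + G (y - x) ≤ g y := by
  set c : ℝ → E := fun t => t • (y - x) + x with hc
  have hcd : HasDerivAt c (y - x) 0 := by
    simpa [hc] using ((hasDerivAt_id (0 : ℝ)).smul_const (y - x)).add_const x
  have hc0 : c 0 = x := by simp [hc]
  have hφd : HasDerivAt (fun t => g (c t)) (G (y - x)) 0 := by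
    have h := HasFDerivAt.comp_hasDerivAt 0 (hc0 ▸ hG) hcd
    exact h
  have hφconv : ConvexOn ℝ Set.univ (fun t => g (c t)) := by
    have := hg.comp_affineMap (AffineMap.lineMap x y : ℝ →ᵃ[ℝ] E)
    simpa [Function.comp_def, AffineMap.lineMap_apply, hc] using this
  have := hφconv.le_slope_of_hasDerivAt (Set.mem_univ (0 : ℝ)) (Set.mem_univ (1 : ℝ))
    zero_lt_one hφd
  rw [slope_def_field] at this
  simp [hc] at this
  have hms := G.map_sub y x
  linarith

lemma strong_first_order {E : Type*} [NormedAddCommGroup E] [InnerProductSpace ℝ E]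
    [CompleteSpace E] {f : E → ℝ} {μ : ℝ}
    (hf : StrongConvexOn Set.univ μ f) (hdiff : Differentiable ℝ f) (x y : E) :
    f x + ⟪gradient f x, y - x⟫ + μ / 2 * ‖y - x‖ ^ 2 ≤ f y := by
  have hg : ConvexOn ℝ Set.univ (fun z => f z - μ / 2 * ‖z‖ ^ 2) :=
    strongConvexOn_iff_convex.mp hf
  have hf' : HasFDerivAt f (InnerProductSpace.toDual ℝ E (gradient f x)) x :=
    (hdiff x).hasGradientAt
  have hn : HasFDerivAt (fun z : E => μ / 2 * ‖z‖ ^ 2) ((μ / 2) • (2 • (innerSL ℝ x))) x :=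
    (hasStrictFDerivAt_norm_sq x).hasFDerivAt.const_mul (μ / 2)
  have hG := hf'.sub hn
  have key := convex_first_order hg hG y
  simp only [ContinuousLinearMap.sub_apply, ContinuousLinearMap.smul_apply,
    InnerProductSpace.toDual_apply_apply, innerSL_apply_apply, smul_eq_mul, nsmul_eq_mul,
    Nat.cast_ofNat] at key
  have e1 : ‖y - x‖ ^ 2 = ‖y‖ ^ 2 - 2 * ⟪x, y⟫ + ‖x‖ ^ 2 := by
    rw [norm_sub_sq_real, real_inner_comm]
  have e2 : ⟪x, y - x⟫ = ⟪x, y⟫ - ‖x‖ ^ 2 := by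
    rw [inner_sub_right, real_inner_self_eq_norm_sq]
  rw [e2] at key
  rw [e1]; linarith [key]

/-- **Strongly convex inner-product bound via Young's inequality.** For `μ`-strongly convex,
`L`-smooth local losses `f₁,…,f_M` with average `F`, points `x₁,…,x_M` with average `x̄` and
consensus error `V`, any `x*`, any `η > 0` and any `β > 0`:
`-(2η/M)∑ₘ ⟪∇fₘ(xₘ), x̄ - x*⟫ ≤ η(β-μ)‖x̄-x*‖² + (ηL²/β)V - 2η(F(x̄) - F(x*))`. -/
theorem strongly_convex_inner_product_bound
    {d M : ℕ} (hM : 1 ≤ M) (L μ : ℝ) (hL : 0 < L) (hμ : 0 < μ)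
    (f : Fin M → EuclideanSpace ℝ (Fin d) → ℝ)
    (hdiff : ∀ m, Differentiable ℝ (f m))
    (hsconv : ∀ m, StrongConvexOn Set.univ μ (f m))
    (hsmooth : ∀ m, LipschitzWith L.toNNReal (gradient (f m)))
    (F : EuclideanSpace ℝ (Fin d) → ℝ)
    (hF : ∀ z, F z = (M : ℝ)⁻¹ * ∑ m, f m z)
    (x : Fin M → EuclideanSpace ℝ (Fin d))
    (xbar : EuclideanSpace ℝ (Fin d)) (hxbar : xbar = (M : ℝ)⁻¹ • ∑ m, x m)
    (V : ℝ) (hV : V = (M : ℝ)⁻¹ * ∑ m, ‖x m - xbar‖ ^ 2)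
    (xstar : EuclideanSpace ℝ (Fin d))
    (η β : ℝ) (hη : 0 < η) (hβ : 0 < β) :
    -(2 * η / M) * ∑ m, ⟪gradient (f m) (x m), xbar - xstar⟫
      ≤ η * (β - μ) * ‖xbar - xstar‖ ^ 2 + η * L ^ 2 / β * V
        - 2 * η * (F xbar - F xstar) := by
  have hM0 : (0 : ℝ) < M := by exact_mod_cast hM
  -- per-summand bound
  have hper : ∀ m, -⟪gradient (f m) (x m), xbar - xstar⟫
      ≤ (f m xstar - f m xbar) + (β - μ) / 2 * ‖xbar - xstar‖ ^ 2
        + L ^ 2 / (2 * β) * ‖x m - xbar‖ ^ 2 := by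
    intro m
    have h1 := strong_first_order (hsconv m) (hdiff m) xbar xstar
    have hsplit : ⟪gradient (f m) xbar, xstar - xbar⟫
        = -⟪gradient (f m) xbar, xbar - xstar⟫ := by
      rw [show xstar - xbar = -(xbar - xstar) by abel, inner_neg_right]
    rw [hsplit] at h1
    have h1' : -⟪gradient (f m) xbar, xbar - xstar⟫
        ≤ f m xstar - f m xbar - μ / 2 * ‖xbar - xstar‖ ^ 2 := by
      rw [norm_sub_rev xstar xbar] at h1
      linarith [h1]
    -- Lipschitz bound
    have hlip : ‖gradient (f m) xbar - gradient (f m) (x m)‖ ≤ L * ‖x m - xbar‖ := by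
      have := (hsmooth m).dist_le_mul xbar (x m)
      rw [dist_eq_norm, dist_eq_norm] at this
      rw [norm_sub_rev xbar (x m)] at this
      calc ‖gradient (f m) xbar - gradient (f m) (x m)‖ ≤ L.toNNReal * ‖x m - xbar‖ := this
        _ = L * ‖x m - xbar‖ := by rw [Real.coe_toNNReal L hL.le]
    have hcs := real_inner_le_norm (gradient (f m) xbar - gradient (f m) (x m)) (xbar - xstar)
    have hyoung : ⟪gradient (f m) xbar - gradient (f m) (x m), xbar - xstar⟫
        ≤ L ^ 2 / (2 * β) * ‖x m - xbar‖ ^ 2 + β / 2 * ‖xbar - xstar‖ ^ 2 := by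
      have hn1 : (0:ℝ) ≤ ‖gradient (f m) xbar - gradient (f m) (x m)‖ := norm_nonneg _
      have h2 : 2 * β * ⟪gradient (f m) xbar - gradient (f m) (x m), xbar - xstar⟫
          ≤ L ^ 2 * ‖x m - xbar‖ ^ 2 + β ^ 2 * ‖xbar - xstar‖ ^ 2 := by
        have h4 := mul_le_mul_of_nonneg_left hcs (by positivity : (0:ℝ) ≤ 2 * β)
        nlinarith [sq_nonneg (‖gradient (f m) xbar - gradient (f m) (x m)‖ - β * ‖xbar - xstar‖),
          mul_le_mul hlip hlip hn1 (by positivity : (0:ℝ) ≤ L * ‖x m - xbar‖)]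
      have heq : L ^ 2 / (2 * β) * ‖x m - xbar‖ ^ 2 + β / 2 * ‖xbar - xstar‖ ^ 2
          = (L ^ 2 * ‖x m - xbar‖ ^ 2 + β ^ 2 * ‖xbar - xstar‖ ^ 2) / (2 * β) := by
        field_simp
      rw [heq, le_div_iff₀ (by positivity)]
      linarith [h2]
    have hdecomp : -⟪gradient (f m) (x m), xbar - xstar⟫
        = -⟪gradient (f m) xbar, xbar - xstar⟫
          + ⟪gradient (f m) xbar - gradient (f m) (x m), xbar - xstar⟫ := by
      rw [inner_sub_left]; ring
    rw [hdecomp]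
    have : (β - μ) / 2 * ‖xbar - xstar‖ ^ 2
        = β / 2 * ‖xbar - xstar‖ ^ 2 - μ / 2 * ‖xbar - xstar‖ ^ 2 := by ring
    linarith [h1', hyoung]
  -- sum up
  have hsum : ∑ m, (-⟪gradient (f m) (x m), xbar - xstar⟫)
      ≤ ∑ m : Fin M, ((f m xstar - f m xbar) + (β - μ) / 2 * ‖xbar - xstar‖ ^ 2
        + L ^ 2 / (2 * β) * ‖x m - xbar‖ ^ 2) :=
    Finset.sum_le_sum fun m _ => hper m
  rw [Finset.sum_add_distrib, Finset.sum_add_distrib, Finset.sum_sub_distrib,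
    Finset.sum_const, ← Finset.mul_sum] at hsum
  simp only [Finset.card_univ, Fintype.card_fin, nsmul_eq_mul] at hsum
  have hVsum : ∑ m, ‖x m - xbar‖ ^ 2 = M * V := by
    rw [hV]; field_simp
  have hFbar : ∑ m, f m xbar = M * F xbar := by rw [hF]; field_simp
  have hFstar : ∑ m, f m xstar = M * F xstar := by rw [hF]; field_simp
  rw [hVsum, hFbar, hFstar] at hsum
  have hfac : -(2 * η / M) * ∑ m, ⟪gradient (f m) (x m), xbar - xstar⟫
      = (2 * η / M) * ∑ m, (-⟪gradient (f m) (x m), xbar - xstar⟫) := by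
    rw [Finset.sum_neg_distrib]; ring
  rw [hfac]
  have hcoef : (0:ℝ) ≤ 2 * η / M := by positivity
  have := mul_le_mul_of_nonneg_left hsum hcoef
  calc (2 * η / M) * ∑ m, (-⟪gradient (f m) (x m), xbar - xstar⟫)
      ≤ (2 * η / M) * (M * F xstar - M * F xbar + (M : ℝ) * ((β - μ) / 2 * ‖xbar - xstar‖ ^ 2)
          + L ^ 2 / (2 * β) * (M * V)) := this
    _ = η * (β - μ) * ‖xbar - xstar‖ ^ 2 + η * L ^ 2 / β * V - 2 * η * (F xbar - F xstar) := by
        field_simp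
        ring
end
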